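/- arXiv:0811.1342 — 4 statements merged into one kernel-verified Lean document; each statement's English description precedes it below -/
import Mathlib

section
/- For all real x, y with x ≠ 0, |sin(x+iy)/(x+iy)| ≥ |sin x / x|; equivalently, Θ(x+iy) ≥ Θ(x) where Θ(z) = log|sin z / z|. -/
open Complex

theorem stmt_3 (x y : ℝ) (hx : x ≠ 0) :
    ‖Complex.sin ((x : ℂ) + (y : ℂ) * Complex.I) /
        ((x : ℂ) + (y : ℂ) * Complex.I)‖ ≥ |Real.sin x / x| := by
  have hz : (x : ℂ) + (y : ℂ) * Complex.I ≠ 0 := by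
    intro h
    apply hx
    have := congrArg Complex.re h
    simpa using this
  have hsin : Complex.sin ((x : ℂ) + (y : ℂ) * Complex.I)
      = (Real.sin x * Real.cosh y : ℝ) + (Real.cos x * Real.sinh y : ℝ) * Complex.I := by
    rw [Complex.sin_add, Complex.cos_mul_I, Complex.sin_mul_I]
    push_cast [Complex.ofReal_cosh, Complex.ofReal_sinh, Complex.ofReal_sin, Complex.ofReal_cos]
    ring
  rw [norm_div, ge_iff_le, abs_div]
  rw [div_le_div_iff₀ (by positivity) (norm_pos_iff.mpr hz)]
  have h1 : ‖(x : ℂ) + (y : ℂ) * Complex.I‖ = Real.sqrt (x ^ 2 + y ^ 2) := by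
    rw [Complex.norm_def, Complex.normSq_add_mul_I]
  have h2 : ‖Complex.sin ((x : ℂ) + (y : ℂ) * Complex.I)‖
      = Real.sqrt ((Real.sin x * Real.cosh y) ^ 2 + (Real.cos x * Real.sinh y) ^ 2) := by
    rw [hsin, Complex.norm_def, Complex.normSq_add_mul_I]
  rw [h1, h2]
  have hA : (0:ℝ) ≤ |Real.sin x| * Real.sqrt (x ^ 2 + y ^ 2) := by positivity
  have hB : (0:ℝ) ≤ Real.sqrt ((Real.sin x * Real.cosh y) ^ 2 + (Real.cos x * Real.sinh y) ^ 2) * |x| := by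
    positivity
  have hsq : (|Real.sin x| * Real.sqrt (x ^ 2 + y ^ 2)) ^ 2
      ≤ (Real.sqrt ((Real.sin x * Real.cosh y) ^ 2 + (Real.cos x * Real.sinh y) ^ 2) * |x|) ^ 2 := by
    rw [mul_pow, mul_pow, _root_.sq_abs, _root_.sq_abs,
      Real.sq_sqrt (by positivity), Real.sq_sqrt (by positivity)]
    have hs : (Real.sin x) ^ 2 ≤ x ^ 2 := Real.sin_sq_le_sq
    have hy : y ^ 2 ≤ (Real.sinh y) ^ 2 := by
      rcases le_or_gt 0 y with h | h
      · have := Real.self_le_sinh_iff.2 h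
        nlinarith
      · have hy' : -y ≤ Real.sinh (-y) := Real.self_le_sinh_iff.2 (by linarith)
        rw [Real.sinh_neg] at hy'
        nlinarith
    have hc : (Real.cosh y) ^ 2 = Real.sinh y ^ 2 + 1 := Real.cosh_sq y
    have hp : Real.sin x ^ 2 + Real.cos x ^ 2 = 1 := Real.sin_sq_add_cos_sq x
    have key : Real.sin x ^ 2 * y ^ 2 ≤ x ^ 2 * Real.sinh y ^ 2 :=
      mul_le_mul hs hy (sq_nonneg y) (sq_nonneg x)
    have hid : ((Real.sin x * Real.cosh y) ^ 2 + (Real.cos x * Real.sinh y) ^ 2) * x ^ 2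
        = Real.sin x ^ 2 * x ^ 2 + x ^ 2 * Real.sinh y ^ 2 := by
      linear_combination (Real.sin x ^ 2 * x ^ 2) * hc + (Real.sinh y ^ 2 * x ^ 2) * hp
    rw [hid]
    nlinarith [key]
  nlinarith [hsq, hA, hB]
end

section
/- For all real x, y with |x| ≤ 3π/4, log|sin(x+iy)/(x+iy)| ≤ log|sin x / x| + |y|. -/
open Complex Real

lemma sinh_le_mul_exp (t : ℝ) (ht : 0 ≤ t) : Real.sinh t ≤ t * Real.exp t := by
  have h := Real.add_one_le_exp (-(2*t))
  have hE : 0 < Real.exp t := Real.exp_pos t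
  have hF : 0 < Real.exp (-t) := Real.exp_pos _
  have hEF : Real.exp t * Real.exp (-t) = 1 := by rw [← Real.exp_add]; simp
  have hF2 : Real.exp (-t) ^ 2 = Real.exp (-(2*t)) := by
    rw [sq, ← Real.exp_add]; ring_nf
  rw [Real.sinh_eq]
  nlinarith [hF, hEF, h, hF2]


lemma bracket_key (a t E S : ℝ) (ha2 : a^2 ≤ 28/100) (ht : 0 ≤ t)
    (hE1 : 1 + t ≤ E) (hD : S ≤ t^2 * E^2) (hq : S ≤ E^2/4) :
    S ≤ (1 - a^2/2) * (a^2*(E^2-1) + t^2*E^2) := by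
  have hE0 : (0:ℝ) ≤ E := by linarith
  have hE2 : (1+t)^2 ≤ E^2 := by nlinarith
  have hE2ge1 : 1 ≤ E^2 := by nlinarith
  rcases le_total t (4/5) with htc | htc
  · have hEt : 86/50 ≤ E^2 * (86/50 - t^2) := by
      nlinarith [hE2, mul_nonneg ht ht, mul_nonneg (mul_nonneg ht ht) ht,
        mul_nonneg ht (sub_nonneg.mpr htc)]
    nlinarith [hD, sq_nonneg a,
      mul_nonneg (sq_nonneg a) (by nlinarith : (0:ℝ) ≤ 86/50*(E^2-1) - t^2*E^2),
      mul_nonneg (mul_nonneg (sq_nonneg a) (by linarith : (0:ℝ) ≤ E^2 - 1))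
        (by linarith : (0:ℝ) ≤ 28/100 - a^2)]
  · have h8 : (0:ℝ) ≤ (1 - a^2/2)*t^2 - 1/4 := by nlinarith
    nlinarith [hq,
      mul_nonneg (by nlinarith : (0:ℝ) ≤ 1 - a^2/2)
        (mul_nonneg (sq_nonneg a) (by linarith : (0:ℝ) ≤ E^2-1)),
      mul_nonneg h8 (sq_nonneg E)]

set_option maxHeartbeats 1600000 in
lemma key (a t : ℝ) (ha : 0 < a) (ha3 : a ≤ 3 * π / 4) (ht : 0 ≤ t) :
    a^2 * Real.sin a ^ 2 + a^2 * Real.sinh t ^ 2 ≤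
      Real.sin a ^ 2 * (a^2 + t^2) * Real.exp (2*t) := by
  set E := Real.exp t with hEdef
  set F := Real.exp (-t) with hFdef
  have hE0 : 0 < E := Real.exp_pos t
  have hF0 : 0 < F := Real.exp_pos _
  have hEF : E * F = 1 := by rw [hEdef, hFdef, ← Real.exp_add]; simp
  have hE1 : 1 + t ≤ E := by have := Real.add_one_le_exp t; linarith
  have hFle1 : F ≤ 1 := Real.exp_le_one_iff.mpr (by linarith)
  have hF2 : 1 - 2*t ≤ F^2 := by
    have h := Real.add_one_le_exp (-(2*t))
    have : F^2 = Real.exp (-(2*t)) := by rw [hFdef, sq, ← Real.exp_add]; ring_nf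
    linarith [this ▸ h]
  have hE2t : Real.exp (2*t) = E^2 := by rw [hEdef, sq, ← Real.exp_add]; ring_nf
  have hsinh : Real.sinh t = (E - F)/2 := Real.sinh_eq t
  rw [hE2t, hsinh]
  have hE2ge1 : 1 ≤ E^2 := by nlinarith
  by_cases hs : 1/2 ≤ Real.sin a
  · -- sin a ≥ 1/2 : use sinh² ≤ (E²-1)/4 ≤ s²(E²-1)
    have hs2 : 1/4 ≤ Real.sin a ^ 2 := by nlinarith
    have h1 : ((E - F)/2) ^ 2 ≤ (E^2 - 1)/4 := by nlinarith [hEF, hFle1, hF0]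
    nlinarith [mul_le_mul_of_nonneg_left h1 (sq_nonneg a),
      mul_nonneg (mul_nonneg (sq_nonneg a) (by linarith : (0:ℝ) ≤ E^2 - 1))
        (by linarith : (0:ℝ) ≤ Real.sin a ^ 2 - 1/4),
      mul_nonneg (mul_nonneg (sq_nonneg (Real.sin a)) (sq_nonneg t)) (sq_nonneg E)]
  · -- sin a < 1/2 forces a < π/6
    push_neg at hs
    have hpi := Real.pi_pos
    have hpi4 : π < 3.15 := Real.pi_lt_d2
    have hpi3 : 3.14 < π := by linarith [Real.pi_gt_d6]
    have haπ : a < π/6 := by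
      by_contra h
      push_neg at h
      have : 1/2 ≤ Real.sin a := by
        rcases le_total a (π/2) with h2 | h2
        · have hmono := Real.strictMonoOn_sin.monotoneOn
          have := hmono (Set.mem_Icc.mpr ⟨by linarith, by linarith⟩)
            (Set.mem_Icc.mpr ⟨by linarith, h2⟩) h
          rw [Real.sin_pi_div_six] at this
          linarith
        · have hmono := Real.strictMonoOn_sin.monotoneOn
          have h4 : Real.sin (π/4) ≤ Real.sin (π - a) := by
            apply hmono (Set.mem_Icc.mpr ⟨by linarith, by linarith⟩)
              (Set.mem_Icc.mpr ⟨by linarith, by linarith⟩) (by linarith)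
          rw [Real.sin_pi_div_four, Real.sin_pi_sub] at h4
          have : (1:ℝ) ≤ Real.sqrt 2 := by
            nlinarith [Real.sq_sqrt (by norm_num : (2:ℝ) ≥ 0), Real.sqrt_nonneg 2]
          linarith
      linarith
    have ha1 : a ≤ 1 := by linarith
    have ha2 : a^2 ≤ (28/100 : ℝ) := by nlinarith
    have hsin_lb : a - a^3/4 < Real.sin a := by
      have := Real.sin_gt_sub_cube ha
      nlinarith [pow_pos ha 3]
    have hcube : a^3 ≤ a := by
      have h := mul_nonneg (mul_nonneg ha.le (by linarith : (0:ℝ) ≤ 1 - a))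
        (by linarith : (0:ℝ) ≤ 1 + a)
      nlinarith [h]
    have hsub_pos : 0 < a - a^3/4 := by linarith
    have hsq : (a - a^3/4)^2 ≤ Real.sin a ^ 2 := by nlinarith [hsin_lb, hsub_pos]
    have hs_lb : a^2 * (1 - a^2/2) ≤ Real.sin a ^ 2 := by nlinarith [hsq, sq_nonneg (a^3)]
    -- D bound : sinh t ≤ t E hence sinh² ≤ t²E²
    have hEF2 : E^2 * F^2 = 1 := by nlinarith [hEF]
    have hkey1 : (1 - 2*t) * E^2 ≤ 1 := by
      have := mul_le_mul_of_nonneg_right hF2 (sq_nonneg E)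
      nlinarith [this, hEF2]
    have hEmF : E - F ≤ 2*t*E := by
      have h6 : E * (E - F) ≤ E * (2*t*E) := by nlinarith
      exact le_of_mul_le_mul_left h6 hE0
    have hEmF0 : 0 ≤ E - F := by linarith
    have hD : ((E - F)/2)^2 ≤ t^2 * E^2 := by nlinarith
    have hq : ((E - F)/2)^2 ≤ E^2/4 := by nlinarith
    -- reduce to : sinh² ≤ (1-a²/2)(a²(E²-1) + t²E²)
    have hred : ((E - F)/2)^2 ≤ (1 - a^2/2) * (a^2*(E^2-1) + t^2*E^2) :=
      bracket_key a t E _ ha2 ht hE1 hD hq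
    have hX : 0 ≤ a^2*(E^2-1) + t^2*E^2 := by
      nlinarith [mul_nonneg (sq_nonneg a) (by linarith : (0:ℝ) ≤ E^2-1),
        mul_nonneg (sq_nonneg t) (sq_nonneg E)]
    calc a^2 * Real.sin a ^2 + a^2 * ((E-F)/2)^2
        ≤ a^2 * Real.sin a ^2 + a^2 * ((1 - a^2/2) * (a^2*(E^2-1) + t^2*E^2)) := by
          nlinarith [mul_le_mul_of_nonneg_left hred (sq_nonneg a)]
      _ ≤ a^2 * Real.sin a ^2 + Real.sin a ^2 * (a^2*(E^2-1) + t^2*E^2) := by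
          nlinarith [mul_le_mul_of_nonneg_right hs_lb hX]
      _ = Real.sin a ^2 * (a^2 + t^2) * E^2 := by ring


lemma abs_sin_sq (x y : ℝ) : (‖Complex.sin ((x:ℂ) + (y:ℂ)*I)‖)^2
    = Real.sin x ^ 2 + Real.sinh y ^ 2 := by
  have h : Complex.sin ((x:ℂ) + (y:ℂ)*I)
      = ((Real.sin x * Real.cosh y : ℝ) : ℂ) + ((Real.cos x * Real.sinh y : ℝ) : ℂ) * I := by
    rw [Complex.sin_add, Complex.cos_mul_I, Complex.sin_mul_I]
    push_cast [← Complex.ofReal_sin, ← Complex.ofReal_cos, ← Complex.ofReal_sinh,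
      ← Complex.ofReal_cosh]
    ring
  rw [h, Complex.sq_norm, Complex.normSq_add_mul_I]
  nlinarith [Real.sin_sq_add_cos_sq x, Real.cosh_sq y]

theorem stmt_4 (x y : ℝ) (hx : |x| ≤ 3 * Real.pi / 4) :
    Real.log (‖
        (if (x : ℂ) + (y : ℂ) * Complex.I = 0 then 1
         else Complex.sin ((x : ℂ) + (y : ℂ) * Complex.I) /
           ((x : ℂ) + (y : ℂ) * Complex.I))‖) ≤
      Real.log |if x = 0 then 1 else Real.sin x / x| + |y| := by
  have hpi := Real.pi_pos
  by_cases hz : (x : ℂ) + (y : ℂ) * Complex.I = 0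
  · obtain ⟨hx0, hy0⟩ : x = 0 ∧ y = 0 := by simpa [Complex.ext_iff] using hz
    subst hx0; subst hy0
    simp
  · rw [if_neg hz, norm_div]
    have habs_sin := abs_sin_sq x y
    have habs_z : (‖(x:ℂ) + (y:ℂ)*I‖)^2 = x^2 + y^2 := by
      rw [Complex.sq_norm, Complex.normSq_add_mul_I]
    have hzpos : 0 < ‖(x:ℂ) + (y:ℂ)*I‖ := norm_pos_iff.mpr hz
    by_cases hx0 : x = 0
    · -- x = 0 : z = y I
      subst hx0
      have hy0 : y ≠ 0 := by
        intro h; exact hz (by simp [h])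
      rw [if_pos rfl]
      simp only [abs_one, Real.log_one, zero_add]
      set t := |y| with htdef
      have ht : 0 < t := abs_pos.mpr hy0
      have hAeq : ‖Complex.sin (((0:ℝ):ℂ) + (y:ℂ)*I)‖
          / ‖((0:ℝ):ℂ) + (y:ℂ)*I‖ = Real.sinh t / t := by
        have h1 : Complex.sin (((0:ℝ):ℂ) + (y:ℂ)*I) = ((Real.sinh y : ℝ):ℂ) * I := by
          rw [Complex.ofReal_zero, zero_add, Complex.sin_mul_I, Complex.ofReal_sinh]
        have h2 : ‖((0:ℝ):ℂ) + (y:ℂ)*I‖ = t := by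
          rw [Complex.ofReal_zero, zero_add]
          rw [norm_mul, Complex.norm_real, Real.norm_eq_abs, Complex.norm_I, mul_one]
        rw [h1, h2, norm_mul, Complex.norm_I, Complex.norm_real, Real.norm_eq_abs, mul_one, Real.abs_sinh]
      rw [hAeq]
      have hsinh : 0 < Real.sinh t := Real.sinh_pos_iff.mpr ht
      have hle : Real.sinh t / t ≤ Real.exp t := by
        rw [div_le_iff₀ ht]
        have := sinh_le_mul_exp t ht.le
        linarith
      calc Real.log (Real.sinh t / t) ≤ Real.log (Real.exp t) :=
            Real.log_le_log (div_pos hsinh ht) hle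
        _ = t := Real.log_exp t
    · -- main case x ≠ 0
      rw [if_neg hx0]
      set a := |x| with hadef
      set t := |y| with htdef
      have ha0 : 0 < a := abs_pos.mpr hx0
      have ht0 : 0 ≤ t := abs_nonneg y
      have hsin_even : Real.sin a ^ 2 = Real.sin x ^ 2 := by
        rcases abs_cases x with ⟨h, _⟩ | ⟨h, _⟩ <;> rw [hadef, h]
        rw [Real.sin_neg]; ring
      have hsinh_even : Real.sinh t ^ 2 = Real.sinh y ^ 2 := by
        rcases abs_cases y with ⟨h, _⟩ | ⟨h, _⟩ <;> rw [htdef, h]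
        rw [Real.sinh_neg]; ring
      have hkey := key a t ha0 hx ht0
      have hsa : 0 < Real.sin a :=
        Real.sin_pos_of_pos_of_lt_pi ha0 (by linarith : a < Real.pi)
      have habs_sinx : |Real.sin x| = Real.sin a := by
        rcases abs_cases x with ⟨h, hx'⟩ | ⟨h, hx'⟩ <;> rw [hadef, h]
        · exact abs_of_nonneg (Real.sin_nonneg_of_nonneg_of_le_pi hx' (by linarith))
        · rw [Real.sin_neg]
          exact abs_of_nonpos (by
            have : 0 ≤ Real.sin (-x) :=
              Real.sin_nonneg_of_nonneg_of_le_pi (by linarith) (by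
                have : |x| = -x := abs_of_neg hx'
                linarith)
            rw [Real.sin_neg] at this; linarith)
      have hBeq : |Real.sin x / x| = Real.sin a / a := by
        rw [abs_div, habs_sinx, hadef]
      have hBpos : 0 < Real.sin a / a := div_pos hsa ha0
      have hsinA : 0 < ‖Complex.sin ((x:ℂ) + (y:ℂ)*I)‖ := by
        have h1 : 0 < (‖Complex.sin ((x:ℂ) + (y:ℂ)*I)‖)^2 := by
          rw [habs_sin, ← hsin_even, ← hsinh_even]
          nlinarith [sq_nonneg (Real.sinh t)]
        nlinarith [norm_nonneg (Complex.sin ((x:ℂ) + (y:ℂ)*I)), h1]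
      have hx2pos : (0:ℝ) < x^2 + y^2 := by
        nlinarith [sq_nonneg y, mul_pos ha0 ha0, _root_.sq_abs x]
      have ha2pos : (0:ℝ) < a^2 := by positivity
      have hmain : ‖Complex.sin ((x:ℂ) + (y:ℂ)*I)‖
          / ‖(x:ℂ) + (y:ℂ)*I‖ ≤ (Real.sin a / a) * Real.exp t := by
        apply le_of_pow_le_pow_left₀ two_ne_zero (by positivity)
        have hrhs : ((Real.sin a / a) * Real.exp t)^2
            = (Real.sin a ^2 * Real.exp t ^2) / a^2 := by ring
        rw [div_pow, habs_sin, habs_z, hrhs, div_le_div_iff₀ hx2pos ha2pos]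
        have hxa : a^2 = x^2 := _root_.sq_abs x
        have hya : t^2 = y^2 := _root_.sq_abs y
        have hexp2 : Real.exp t ^ 2 = Real.exp (2*t) := by
          rw [sq, ← Real.exp_add]; ring_nf
        rw [← hsin_even, ← hsinh_even, hexp2, ← hxa, ← hya]
        nlinarith [hkey]
      have hApos : 0 < ‖Complex.sin ((x:ℂ) + (y:ℂ)*I)‖
          / ‖(x:ℂ) + (y:ℂ)*I‖ := div_pos hsinA hzpos
      have hlog := Real.log_le_log hApos hmain
      rw [Real.log_mul (ne_of_gt hBpos) (Real.exp_ne_zero t), Real.log_exp] at hlog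
      rw [hBeq]
      exact hlog
end

section
/- For all real x and y: cos(2x)·(1 − e^{−2|y|})/2 − (1 − e^{−4|y|})/4 ≤ (sin²x / x²)·y², provided |x| ≤ 3π/4 (with sin²x/x² interpreted as 1 at x = 0). -/
lemma key_pos (x : ℝ) (hx0 : 0 < x) (hx : x ≤ 3 * Real.pi / 4) :
    x ^ 2 ≤ Real.sin x ^ 2 * (1 + 4 * x ^ 2) := by
  have hpi := Real.pi_gt_three
  have hpi4 := Real.pi_le_four
  rcases le_or_gt x 1 with h1 | h1
  · have hs : x - x ^ 3 / 4 < Real.sin x := by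
      have := Real.sin_gt_sub_cube hx0; nlinarith [pow_pos hx0 3]
    have hx2 : x ^ 2 ≤ 1 := by nlinarith
    have hx3 : x ^ 3 ≤ x := by nlinarith [mul_le_mul_of_nonneg_left hx2 hx0.le]
    have hp : 0 ≤ x - x ^ 3 / 4 := by linarith
    have hs2 : (x - x ^ 3 / 4) ^ 2 ≤ Real.sin x ^ 2 := by nlinarith
    have hs3 := mul_le_mul_of_nonneg_right hs2 (by positivity : (0:ℝ) ≤ 1 + 4 * x ^ 2)
    have h64 : x ^ 6 ≤ x ^ 4 := by nlinarith [pow_nonneg hx0.le 4]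
    nlinarith [hs3, h64, pow_nonneg hx0.le 4, pow_nonneg hx0.le 8]
  · have hc : Real.cos (x - Real.pi / 2) = Real.sin x := by
      rw [← Real.cos_neg, neg_sub, Real.cos_pi_div_two_sub]
    have habs : |x - Real.pi / 2| ≤ Real.pi / 4 :=
      abs_le.mpr ⟨by nlinarith, by nlinarith⟩
    have hsin : Real.sqrt 2 / 2 ≤ Real.sin x := by
      rw [← hc, ← Real.cos_abs, ← Real.cos_pi_div_four]
      exact Real.cos_le_cos_of_nonneg_of_le_pi (abs_nonneg _) (by nlinarith) habs
    have h2 : Real.sqrt 2 ^ 2 = 2 := Real.sq_sqrt (by norm_num)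
    have hsq : (1:ℝ)/2 ≤ Real.sin x ^ 2 := by nlinarith [Real.sqrt_nonneg 2]
    nlinarith

lemma key_all (x : ℝ) (hx : |x| ≤ 3 * Real.pi / 4) (hx0 : x ≠ 0) :
    x ^ 2 ≤ Real.sin x ^ 2 * (1 + 4 * x ^ 2) := by
  rcases lt_or_gt_of_ne hx0 with h | h
  · have := key_pos (-x) (by linarith) (by rw [abs_of_neg h] at hx; linarith)
    simpa [Real.sin_neg] using this
  · exact key_pos x h (by rwa [abs_of_pos h] at hx)

theorem stmt_5 (x y : ℝ) (hx : |x| ≤ 3 * Real.pi / 4) :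
    Real.cos (2 * x) * (1 - Real.exp (-2 * |y|)) / 2 -
        (1 - Real.exp (-4 * |y|)) / 4 ≤
      (if x = 0 then 1 else Real.sin x ^ 2 / x ^ 2) * y ^ 2 := by
  set t := |y| with ht
  set u := Real.exp (-2 * t) with hu
  have ht0 : 0 ≤ t := abs_nonneg y
  have hty : t ^ 2 = y ^ 2 := sq_abs y
  have hu1 : u ≤ 1 := Real.exp_le_one_iff.mpr (by linarith)
  have hu0 : 0 < u := Real.exp_pos _
  have h2t : 1 - u ≤ 2 * t := by
    have := Real.add_one_le_exp (-2 * t); linarith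
  have e4 : Real.exp (-4 * t) = u ^ 2 := by
    rw [hu, sq, ← Real.exp_add]; ring_nf
  have hcos : Real.cos (2 * x) = 1 - 2 * Real.sin x ^ 2 := by
    have := Real.sin_sq_add_cos_sq x
    rw [Real.cos_two_mul]; linarith
  rw [e4, hcos]
  by_cases hx0 : x = 0
  · subst hx0
    norm_num
    rw [← hty]
    nlinarith [mul_nonneg (by linarith : (0:ℝ) ≤ 2 * t - (1 - u)) (by linarith : (0:ℝ) ≤ 2 * t + (1 - u))]
  · rw [if_neg hx0]
    have hkey := key_all x hx hx0
    have hx2 : 0 < x ^ 2 := by positivity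
    rw [div_mul_eq_mul_div, le_div_iff₀ hx2, ← hty]
    have hB : (1 - u) ^ 2 ≤ 4 * t ^ 2 := by nlinarith
    nlinarith [mul_le_mul_of_nonneg_left hkey (sq_nonneg (1 - u)),
      mul_le_mul_of_nonneg_left hB (sq_nonneg (Real.sin x)),
      mul_nonneg (mul_nonneg (mul_nonneg (sq_nonneg (Real.sin x)) hx2.le) (by linarith : (0:ℝ) ≤ 1 - u)) hu0.le]
end

section
/- Let J be a finite subset of a quasi-lattice closed under binary infima, and for γ ∈ J let k(γ) = |{γ' ∈ J : γ' ≥ γ}|. If γ, γ' ∈ J are distinct with k(γ') ≥ k(γ), then k(γ ∧ γ') > k(γ). -/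
open Classical in
theorem stmt_15 {Γ : Type*} [SemilatticeInf Γ]
    (J : Set Γ) (hJfin : J.Finite) (hJ : ∀ a ∈ J, ∀ b ∈ J, a ⊓ b ∈ J)
    (kk : Γ → ℕ) (hkk : ∀ γ, kk γ = {γ' ∈ J | γ ≤ γ'}.ncard)
    (γ γ' : Γ) (hγ : γ ∈ J) (hγ' : γ' ∈ J) (hne : γ ≠ γ')
    (hle : kk γ ≤ kk γ') :
    kk γ < kk (γ ⊓ γ') := by
  have hfin : ∀ a : Γ, {γ' ∈ J | a ≤ γ'}.Finite :=
    fun a => hJfin.subset (fun x hx => hx.1)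
  have hnot : ¬ γ ≤ γ' := by
    intro h
    have hsub : {x ∈ J | γ' ≤ x} ⊂ {x ∈ J | γ ≤ x} := by
      constructor
      · rintro x ⟨hxJ, hx⟩; exact ⟨hxJ, h.trans hx⟩
      · intro hcon
        have := hcon ⟨hγ, le_refl γ⟩
        exact hne (le_antisymm h this.2)
    have := Set.ncard_lt_ncard hsub (hfin γ)
    rw [hkk γ, hkk γ'] at hle
    omega
  have hsub : {x ∈ J | γ ≤ x} ⊂ {x ∈ J | γ ⊓ γ' ≤ x} := by
    constructor
    · rintro x ⟨hxJ, hx⟩; exact ⟨hxJ, inf_le_left.trans hx⟩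
    · intro hcon
      have := hcon ⟨hγ', inf_le_right⟩
      exact hnot this.2
  have := Set.ncard_lt_ncard hsub (hfin (γ ⊓ γ'))
  rw [hkk γ, hkk (γ ⊓ γ')]
  exact this
end
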